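/- Let a ∈ (0,∞], let ξ : (0,a) → (0,∞) be measurable with 0 < ∫_0^t ξ(s) ds < ∞ for every t ∈ (0,a), and let h : (0,a) → [0,∞) be nonincreasing with s ↦ h(s)ξ(s) integrable on (0,t) for every t ∈ (0,a). Then the function t ↦ (∫_0^t h(s)ξ(s) ds)/(∫_0^t ξ(s) ds) is nonincreasing on (0,a). -/

import Mathlib

open MeasureTheory Filter Set ENNReal

lemma split_int (f : ℝ → ℝ) (x y : ℝ) (hx : 0 < x) (hxy : x ≤ y)
    (hf : IntegrableOn f (Ioo 0 y)) :
    ∫ s in Ioo (0:ℝ) y, f s = (∫ s in Ioo (0:ℝ) x, f s) + ∫ s in Ioo x y, f s := by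
  have h1 : IntegrableOn f (Ioc 0 x) := by
    rw [integrableOn_Ioc_iff_integrableOn_Ioo]
    exact hf.mono_set (Ioo_subset_Ioo le_rfl hxy)
  have h2 : IntegrableOn f (Ioc x y) := by
    rw [integrableOn_Ioc_iff_integrableOn_Ioo]
    exact hf.mono_set (Ioo_subset_Ioo hx.le le_rfl)
  rw [← integral_Ioc_eq_integral_Ioo, ← integral_Ioc_eq_integral_Ioo,
    ← integral_Ioc_eq_integral_Ioo, ← Ioc_union_Ioc_eq_Ioc hx.le hxy,
    setIntegral_union (Ioc_disjoint_Ioc_of_le le_rfl) measurableSet_Ioc h1 h2]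

/-- For `a ∈ (0,∞]`, a measurable `ξ : (0,a) → (0,∞)` with
`0 < ∫_0^t ξ < ∞` for every `t ∈ (0,a)`, and a nonincreasing `h : (0,a) → [0,∞)` with
`h·ξ` integrable on `(0,t)` for every `t ∈ (0,a)`, the function
`t ↦ (∫_0^t h ξ)/(∫_0^t ξ)` is nonincreasing on `(0,a)`. -/
theorem stmt_5 (a : ℝ≥0∞) (ha : 0 < a) (ξ h : ℝ → ℝ)
    (hξmeas : Measurable ξ)
    (hξpos : ∀ s : ℝ, 0 < s → ENNReal.ofReal s < a → 0 < ξ s)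
    (hξint : ∀ t : ℝ, 0 < t → ENNReal.ofReal t < a →
      IntegrableOn ξ (Ioo 0 t) ∧ 0 < ∫ s in Ioo (0 : ℝ) t, ξ s)
    (hh_nonneg : ∀ s : ℝ, 0 < s → ENNReal.ofReal s < a → 0 ≤ h s)
    (hh_anti : ∀ s u : ℝ, 0 < s → s ≤ u → ENNReal.ofReal u < a → h u ≤ h s)
    (hhξint : ∀ t : ℝ, 0 < t → ENNReal.ofReal t < a →
      IntegrableOn (fun s => h s * ξ s) (Ioo 0 t)) :
    AntitoneOn
      (fun t => (∫ s in Ioo (0 : ℝ) t, h s * ξ s) / ∫ s in Ioo (0 : ℝ) t, ξ s)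
      {t : ℝ | 0 < t ∧ ENNReal.ofReal t < a} := by
  rintro x ⟨hx0, hxa⟩ y ⟨hy0, hya⟩ hxy
  -- basic facts at s ∈ sets
  have memle : ∀ s : ℝ, s ≤ y → ENNReal.ofReal s < a :=
    fun s hs => lt_of_le_of_lt (ENNReal.ofReal_le_ofReal hs) hya
  set A := ∫ s in Ioo (0:ℝ) x, ξ s with hA
  set B := ∫ s in Ioo x y, ξ s with hB
  set P := ∫ s in Ioo (0:ℝ) x, h s * ξ s with hP
  set Q := ∫ s in Ioo x y, h s * ξ s with hQ
  have hApos : 0 < A := (hξint x hx0 hxa).2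
  have hξinty := (hξint y hy0 hya).1
  have hhξinty := hhξint y hy0 hya
  have hBnonneg : 0 ≤ B := by
    apply setIntegral_nonneg measurableSet_Ioo
    intro s hs
    exact (hξpos s (hx0.trans hs.1) (memle s hs.2.le)).le
  have hc_nonneg : 0 ≤ h x := hh_nonneg x hx0 hxa
  -- integrability on subintervals
  have hξxy : IntegrableOn ξ (Ioo x y) := hξinty.mono_set (Ioo_subset_Ioo hx0.le le_rfl)
  have hhξxy : IntegrableOn (fun s => h s * ξ s) (Ioo x y) :=
    hhξinty.mono_set (Ioo_subset_Ioo hx0.le le_rfl)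
  have hξx : IntegrableOn ξ (Ioo 0 x) := (hξint x hx0 hxa).1
  have hhξx : IntegrableOn (fun s => h s * ξ s) (Ioo 0 x) := hhξint x hx0 hxa
  -- Q ≤ h x * B
  have hQle : Q ≤ h x * B := by
    rw [hQ, hB, ← integral_const_mul]
    apply setIntegral_mono_on hhξxy (hξxy.const_mul _) measurableSet_Ioo
    intro s hs
    exact mul_le_mul_of_nonneg_right (hh_anti x s hx0 hs.1.le (memle s hs.2.le))
      (hξpos s (hx0.trans hs.1) (memle s hs.2.le)).le
  -- h x * A ≤ P
  have hPge : h x * A ≤ P := by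
    rw [hP, hA, ← integral_const_mul]
    apply setIntegral_mono_on (hξx.const_mul _) hhξx measurableSet_Ioo
    intro s hs
    exact mul_le_mul_of_nonneg_right (hh_anti s x hs.1 hs.2.le hxa)
      (hξpos s hs.1 (memle s (hs.2.le.trans hxy))).le
  -- splits
  have hsplitξ : ∫ s in Ioo (0:ℝ) y, ξ s = A + B := split_int ξ x y hx0 hxy hξinty
  have hsplith : ∫ s in Ioo (0:ℝ) y, h s * ξ s = P + Q :=
    split_int (fun s => h s * ξ s) x y hx0 hxy hhξinty
  simp only
  rw [hsplitξ, hsplith, ← hA, ← hP]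
  rw [div_le_div_iff₀ (by linarith) hApos]
  nlinarith [mul_le_mul_of_nonneg_right hQle hApos.le,
    mul_le_mul_of_nonneg_right hPge hBnonneg]
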